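/- The function M ↦ M·q(M)/p(M), which equals ∫₀^M s^a/((1−s)^b p(s)²) ds, is a continuous, strictly increasing bijection from (0,1) onto (0,∞). -/

import Mathlib

open Real Set MeasureTheory Filter Topology

section aux
variable {p : ℝ → ℝ} {a b : ℝ}

lemma fCont (ha : 1 ≤ a) (hpc : ContinuousOn p (Icc 0 1))
    (hppos : ∀ M ∈ Ico (0:ℝ) 1, 0 < p M) {m : ℝ} (hm1 : m < 1) :
    ContinuousOn (fun s => s ^ a / ((1 - s) ^ b * p s ^ 2)) (Icc 0 m) := by
  have hsub : Icc (0:ℝ) m ⊆ Icc 0 1 := Icc_subset_Icc le_rfl hm1.le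
  apply ContinuousOn.div
  · exact continuousOn_id.rpow_const fun x hx => Or.inr (by linarith)
  · exact ((continuousOn_const.sub continuousOn_id).rpow_const
      fun x hx => Or.inl (by simp only [Pi.sub_apply, id_eq]; nlinarith [hx.2])).mul ((hpc.mono hsub).pow 2)
  · intro x hx
    have h1 : (0:ℝ) < 1 - x := by nlinarith [hx.2]
    have h2 : 0 < p x := hppos x ⟨hx.1, lt_of_le_of_lt hx.2 hm1⟩
    positivity

lemma fInt (ha : 1 ≤ a) (hpc : ContinuousOn p (Icc 0 1))
    (hppos : ∀ M ∈ Ico (0:ℝ) 1, 0 < p M) {u v : ℝ} (hu : 0 ≤ u) (huv : u ≤ v) (hv : v < 1) :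
    IntervalIntegrable (fun s => s ^ a / ((1 - s) ^ b * p s ^ 2)) volume u v := by
  apply ContinuousOn.intervalIntegrable
  rw [uIcc_of_le huv]
  exact (fCont ha hpc hppos hv).mono (Icc_subset_Icc hu le_rfl)

lemma fPos (hppos : ∀ M ∈ Ico (0:ℝ) 1, 0 < p M) {x : ℝ} (hx : x ∈ Ioo (0:ℝ) 1) :
    0 < x ^ a / ((1 - x) ^ b * p x ^ 2) := by
  have h1 : (0:ℝ) < 1 - x := by linarith [hx.2]
  have h2 : 0 < p x := hppos x ⟨hx.1.le, hx.2⟩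
  have h3 : 0 < x := hx.1
  positivity

end aux

/-- `q(M) = (p(M)/M) ∫₀^M s^a / ((1-s)^b p(s)²) ds`. -/
noncomputable def qfun (p : ℝ → ℝ) (a b : ℝ) (M : ℝ) : ℝ :=
  p M / M * ∫ s in (0:ℝ)..M, s ^ a / ((1 - s) ^ b * p s ^ 2)

/-- The function `M ↦ M q(M)/p(M)`, which equals `∫₀^M s^a/((1-s)^b p(s)²) ds`,
is a continuous, strictly increasing bijection from `(0,1)` onto `(0,∞)`. -/
theorem Mqp_bijection (a b : ℝ) (ha : 1 ≤ a) (hb : 1 ≤ b)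
    (p : ℝ → ℝ) (hpc : ContinuousOn p (Icc 0 1))
    (hpa : AntitoneOn p (Icc 0 1)) (hp1 : p 1 = 0)
    (hppos : ∀ M ∈ Ico (0:ℝ) 1, 0 < p M) :
    (∀ M ∈ Ioo (0:ℝ) 1,
        M * qfun p a b M / p M = ∫ s in (0:ℝ)..M, s ^ a / ((1 - s) ^ b * p s ^ 2)) ∧
    ContinuousOn (fun M => M * qfun p a b M / p M) (Ioo (0:ℝ) 1) ∧
    StrictMonoOn (fun M => M * qfun p a b M / p M) (Ioo (0:ℝ) 1) ∧
    Set.BijOn (fun M => M * qfun p a b M / p M) (Ioo (0:ℝ) 1) (Ioi (0:ℝ)) := by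
  set f : ℝ → ℝ := fun s => s ^ a / ((1 - s) ^ b * p s ^ 2) with hf
  set F : ℝ → ℝ := fun M => ∫ s in (0:ℝ)..M, f s with hF
  -- first conjunct
  have hEq : ∀ M ∈ Ioo (0:ℝ) 1, M * qfun p a b M / p M = F M := by
    intro M hM
    have hM0 : M ≠ 0 := ne_of_gt hM.1
    have hpM : p M ≠ 0 := ne_of_gt (hppos M ⟨hM.1.le, hM.2⟩)
    rw [qfun]
    field_simp
    rfl
  -- continuity of F on Ioo 0 1
  have hFc : ∀ M ∈ Ioo (0:ℝ) 1, ContinuousAt F M := by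
    intro M hM
    have hm1 : (M + 1) / 2 < 1 := by linarith [hM.2]
    have hm0 : (0:ℝ) ≤ (M + 1) / 2 := by linarith [hM.1]
    have hio : IntegrableOn f (uIcc 0 ((M + 1) / 2)) volume := by
      rw [uIcc_of_le hm0]
      exact ((fCont ha hpc hppos hm1)).integrableOn_Icc
    have h := intervalIntegral.continuousOn_primitive_interval (μ := volume) hio
    rw [uIcc_of_le hm0] at h
    exact h.continuousAt (Icc_mem_nhds hM.1 (by linarith [hM.1]))
  have hFcont : ContinuousOn F (Ioo (0:ℝ) 1) := fun M hM => (hFc M hM).continuousWithinAt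
  -- strict monotonicity
  have hFmono : StrictMonoOn F (Ioo (0:ℝ) 1) := by
    intro M₁ h₁ M₂ h₂ hlt
    have hI1 : IntervalIntegrable f volume 0 M₁ := fInt ha hpc hppos le_rfl h₁.1.le h₁.2
    have hI2 : IntervalIntegrable f volume M₁ M₂ := fInt ha hpc hppos h₁.1.le hlt.le h₂.2
    have key : F M₁ + ∫ s in M₁..M₂, f s = F M₂ :=
      intervalIntegral.integral_add_adjacent_intervals hI1 hI2
    have hpos : 0 < ∫ s in M₁..M₂, f s := by
      apply intervalIntegral.intervalIntegral_pos_of_pos_on hI2 _ hlt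
      intro x hx
      exact fPos hppos ⟨lt_trans h₁.1 hx.1, lt_trans hx.2 h₂.2⟩
    linarith
  -- F positive on Ioo 0 1
  have hFpos : ∀ M ∈ Ioo (0:ℝ) 1, 0 < F M := by
    intro M hM
    apply intervalIntegral.intervalIntegral_pos_of_pos_on
      (fInt ha hpc hppos le_rfl hM.1.le hM.2) _ hM.1
    intro x hx
    exact fPos hppos ⟨hx.1, lt_trans hx.2 hM.2⟩
  -- surjectivity
  have hsurj : SurjOn F (Ioo (0:ℝ) 1) (Ioi (0:ℝ)) := by
    intro y hy
    have hy0 : (0:ℝ) < y := hy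
    -- small side
    obtain ⟨M₁, hM₁mem, hM₁lt⟩ : ∃ M₁ ∈ Ioc (0:ℝ) (1/2), F M₁ < y := by
      have hio : IntegrableOn f (uIcc 0 (1/2)) volume := by
        rw [uIcc_of_le (by norm_num)]
        exact (fCont ha hpc hppos (by norm_num)).integrableOn_Icc
      have h := intervalIntegral.continuousOn_primitive_interval (μ := volume) hio
      rw [uIcc_of_le (by norm_num)] at h
      have h0 : ContinuousWithinAt F (Icc 0 (1/2)) 0 :=
        h 0 ⟨le_rfl, by norm_num⟩
      have h0' : ContinuousWithinAt F (Ioc 0 (1/2)) 0 := h0.mono Ioc_subset_Icc_self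
      have hF0 : F 0 = 0 := intervalIntegral.integral_same
      have hev : ∀ᶠ x in 𝓝[Ioc (0:ℝ) (1/2)] 0, F x < y := by
        have := h0'.tendsto
        rw [hF0] at this
        exact this.eventually_lt_const hy0
      haveI : (𝓝[Ioc (0:ℝ) (1/2)] 0).NeBot := left_nhdsWithin_Ioc_neBot (by norm_num)
      exact (eventually_mem_nhdsWithin.and hev).exists.imp fun x hx => ⟨hx.1, hx.2⟩
    -- large side
    obtain ⟨M₂, hM₂mem, hM₂gt⟩ : ∃ M₂ ∈ Ioo (1/2 : ℝ) 1, y < F M₂ := by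
      have hp2 : 0 < p (1/2) := hppos _ (by constructor <;> norm_num)
      set c : ℝ := (1/2 : ℝ) ^ a / p (1/2) ^ 2 with hc
      have hcpos : 0 < c := by positivity
      set ε : ℝ := min (1/4) ((1/2) * Real.exp (-((y+1)/c))) with hε
      have hεpos : 0 < ε := lt_min (by norm_num) (by positivity)
      have hεle : ε ≤ 1/4 := min_le_left _ _
      refine ⟨1 - ε, ⟨by linarith, by linarith⟩, ?_⟩
      set M₂ : ℝ := 1 - ε with hM₂
      have hM₂1 : M₂ < 1 := by simp only [hM₂]; linarith
      have hM₂half : (1/2 : ℝ) ≤ M₂ := by simp only [hM₂]; linarith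
      -- F M₂ = F (1/2) + ∫_{1/2}^{M₂}
      have hI1 : IntervalIntegrable f volume 0 (1/2) := fInt ha hpc hppos le_rfl (by norm_num) (by norm_num)
      have hI2 : IntervalIntegrable f volume (1/2) M₂ := fInt ha hpc hppos (by norm_num) hM₂half hM₂1
      have key : F (1/2) + ∫ s in (1/2 : ℝ)..M₂, f s = F M₂ :=
        intervalIntegral.integral_add_adjacent_intervals hI1 hI2
      have hFhalf : 0 ≤ F (1/2) := by
        apply intervalIntegral.integral_nonneg (by norm_num)
        intro u hu
        rcases eq_or_lt_of_le hu.1 with h | h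
        · simp [hf, ← h, Real.zero_rpow (by linarith : a ≠ 0)]
        · exact (fPos hppos ⟨h, lt_of_le_of_lt hu.2 (by norm_num)⟩).le
      -- compare with c / (1 - s)
      have hcomp : (∫ s in (1/2 : ℝ)..M₂, c / (1 - s)) ≤ ∫ s in (1/2 : ℝ)..M₂, f s := by
        apply intervalIntegral.integral_mono_on hM₂half _ hI2
        · intro x hx
          have hx1 : 1 - x ∈ Icc ε (1/2 : ℝ) := ⟨by simp only [hM₂] at hx; linarith [hx.2], by linarith [hx.1]⟩
          have h1x : 0 < 1 - x := lt_of_lt_of_le hεpos hx1.1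
          have hxmem : x ∈ Icc (0:ℝ) 1 := ⟨by linarith [hx.1], by linarith [hx1.1]⟩
          have hpx : 0 < p x := hppos x ⟨hxmem.1, by nlinarith [hx1.1]⟩
          have hnum : ((1:ℝ)/2) ^ a ≤ x ^ a :=
            Real.rpow_le_rpow (by norm_num) (by linarith [hx.1]) (by linarith)
          have hden1 : (1 - x) ^ b ≤ 1 - x := by
            calc (1 - x) ^ b ≤ (1 - x) ^ (1:ℝ) :=
                  Real.rpow_le_rpow_of_exponent_ge h1x (by linarith [hx1.2]) hb
            _ = 1 - x := Real.rpow_one _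
          have hden2 : p x ^ 2 ≤ p (1/2) ^ 2 := by
            have := hpa (by constructor <;> norm_num : (1/2:ℝ) ∈ Icc (0:ℝ) 1) hxmem hx.1
            exact pow_le_pow_left₀ hpx.le this 2
          have hdpos : 0 < (1 - x) ^ b * p x ^ 2 := by positivity
          have : c / (1 - x) = ((1:ℝ)/2) ^ a / ((1 - x) * p (1/2) ^ 2) := by
            rw [hc]; field_simp
          rw [this]
          apply div_le_div₀ (Real.rpow_nonneg (by linarith [hx.1]) a) hnum hdpos
          calc (1 - x) ^ b * p x ^ 2 ≤ (1 - x) * p x ^ 2 := by nlinarith [sq_nonneg (p x)]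
          _ ≤ (1 - x) * p (1/2) ^ 2 := by nlinarith
        · apply ContinuousOn.intervalIntegrable
          rw [uIcc_of_le hM₂half]
          apply ContinuousOn.div continuousOn_const (continuousOn_const.sub continuousOn_id)
          intro x hx
          simp only [hM₂] at hx; simp only [Pi.sub_apply, id_eq]; intro h; linarith [hx.2]
      -- compute ∫ c/(1-s)
      have hcalc : (∫ s in (1/2 : ℝ)..M₂, c / (1 - s)) = -c * Real.log ε - (-c * Real.log (1/2)) := by
        have : ∀ x ∈ uIcc (1/2 : ℝ) M₂, HasDerivAt (fun s => -c * Real.log (1 - s)) (c / (1 - x)) x := by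
          intro x hx
          rw [uIcc_of_le hM₂half] at hx
          have h1x : 0 < 1 - x := by simp only [hM₂] at hx; linarith [hx.2]
          have hd : HasDerivAt (fun s : ℝ => 1 - s) (-1) x := by
            simpa using (hasDerivAt_id x).const_sub 1
          have := (Real.hasDerivAt_log (ne_of_gt h1x)).comp x hd
          have h2 : HasDerivAt (fun y => -c * Real.log (1 - y)) (-c * ((1 - x)⁻¹ * -1)) x :=
            this.const_mul (-c)
          convert h2 using 1
          ring
        have hint : IntervalIntegrable (fun s => c / (1 - s)) volume (1/2) M₂ := by
          apply ContinuousOn.intervalIntegrable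
          rw [uIcc_of_le hM₂half]
          apply ContinuousOn.div continuousOn_const (continuousOn_const.sub continuousOn_id)
          intro x hx
          simp only [hM₂] at hx; simp only [Pi.sub_apply, id_eq]; intro h; linarith [hx.2]
        have := intervalIntegral.integral_eq_sub_of_hasDerivAt this hint
        rw [this]
        simp only [hM₂]
        norm_num
      -- bound log
      have hlog : y + 1 ≤ -c * Real.log ε - (-c * Real.log (1/2)) := by
        have hεle2 : ε ≤ (1/2) * Real.exp (-((y+1)/c)) := min_le_right _ _
        have hlogε : Real.log ε ≤ Real.log (1/2) + (-((y+1)/c)) := by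
          calc Real.log ε ≤ Real.log ((1/2) * Real.exp (-((y+1)/c))) :=
                Real.log_le_log hεpos hεle2
          _ = Real.log (1/2) + (-((y+1)/c)) := by
                rw [Real.log_mul (by norm_num) (Real.exp_ne_zero _), Real.log_exp]
        have : (y+1)/c ≤ Real.log (1/2) - Real.log ε := by linarith
        have h2 : y + 1 ≤ c * (Real.log (1/2) - Real.log ε) := (div_le_iff₀' hcpos).mp this
        linarith [h2]
      linarith [hcomp, hlog, hFhalf, key, hcalc.symm.le]
    -- IVT
    have hM₁M₂ : M₁ < M₂ := lt_of_le_of_lt hM₁mem.2 hM₂mem.1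
    have hsub : Icc M₁ M₂ ⊆ Ioo (0:ℝ) 1 := fun x hx =>
      ⟨lt_of_lt_of_le hM₁mem.1 hx.1, lt_of_le_of_lt hx.2 hM₂mem.2⟩
    have hivt := intermediate_value_Ioo hM₁M₂.le (hFcont.mono hsub)
    have hymem : y ∈ Ioo (F M₁) (F M₂) := ⟨hM₁lt, hM₂gt⟩
    obtain ⟨x, hx, hfx⟩ := hivt hymem
    exact ⟨x, hsub (Ioo_subset_Icc_self hx), hfx⟩
  -- assemble
  have hEq' : EqOn (fun M => M * qfun p a b M / p M) F (Ioo (0:ℝ) 1) := fun M hM => hEq M hM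
  refine ⟨hEq, hFcont.congr hEq', ?_, ?_⟩
  · intro x hx y hy hxy
    rw [hEq' hx, hEq' hy]
    exact hFmono hx hy hxy
  · refine Set.BijOn.congr ⟨fun M hM => hFpos M hM, hFmono.injOn, hsurj⟩ hEq'.symm
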